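/- Let φ be the traveling-wave profile. Then for all η ∈ [0,1/2]: (4√2/3)·η·(1/2 − η)^{3/2} ≤ φ(η) ≤ (4√6/3)·η·(1/2 − η)^{3/2}. -/

import Mathlib

/-- The traveling-wave profile problem (0.2) with d = 1/2. -/
def IsTWProfile (φ : ℝ → ℝ) : Prop :=
  ContDiffOn ℝ 1 φ (Set.Icc 0 (1/2)) ∧
  ContDiffOn ℝ 3 φ (Set.Ioo 0 (1/2)) ∧
  (∀ η ∈ Set.Ioo (0:ℝ) (1/2), 0 < φ η) ∧
  φ 0 = 0 ∧ φ (1/2) = 0 ∧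
  derivWithin φ (Set.Icc 0 (1/2)) 0 = 1 ∧
  (∀ η ∈ Set.Ioo (0:ℝ) (1/2), φ η * deriv (deriv (deriv φ)) η = 1)

open Set Filter Real Topology


lemma comp_principle {g : ℝ → ℝ} (hg : ContinuousOn g (Set.Icc 0 (1/2)))
    (h0 : g 0 ≤ 0) (h1 : g (1/2) ≤ 0)
    (hconv : ∀ x ∈ Set.Ioo (0:ℝ) (1/2), 0 < g x → 0 < deriv (deriv g) x) :
    ∀ x ∈ Set.Icc (0:ℝ) (1/2), g x ≤ 0 := by
  by_contra hcon
  push_neg at hcon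
  obtain ⟨x₀, hx₀, hgx₀⟩ := hcon
  obtain ⟨z, hzmem, hzmax⟩ := isCompact_Icc.exists_isMaxOn (Set.nonempty_Icc.2 (by norm_num)) hg
  have hgz : 0 < g z := lt_of_lt_of_le hgx₀ (hzmax hx₀)
  have hz0 : z ≠ 0 := by rintro rfl; linarith
  have hz1 : z ≠ 1/2 := by rintro rfl; linarith
  have hzI : z ∈ Set.Ioo (0:ℝ) (1/2) :=
    ⟨lt_of_le_of_ne hzmem.1 (Ne.symm hz0), lt_of_le_of_ne hzmem.2 hz1⟩
  have hca : ContinuousAt g z := hg.continuousAt (Icc_mem_nhds hzI.1 hzI.2)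
  have hev1 : ∀ᶠ y in 𝓝 z, 0 < g y := Filter.Tendsto.eventually_const_lt hgz hca
  have hev2 : ∀ᶠ y in 𝓝 z, y ∈ Set.Ioo (0:ℝ) (1/2) := isOpen_Ioo.mem_nhds hzI
  obtain ⟨ε, hε, hball⟩ := Metric.eventually_nhds_iff.mp (hev1.and hev2)
  set δ := ε/2 with hδdef
  have hδpos : 0 < δ := by positivity
  have hsub : ∀ y ∈ Set.Icc (z-δ) (z+δ), 0 < g y ∧ y ∈ Set.Ioo (0:ℝ) (1/2) := by
    intro y hy
    apply hball
    rw [Real.dist_eq, abs_lt]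
    constructor <;> [linarith [hy.1]; linarith [hy.2]]
  have hsub2 : Set.Icc (z-δ) (z+δ) ⊆ Set.Icc (0:ℝ) (1/2) := fun y hy =>
    Set.Ioo_subset_Icc_self (hsub y hy).2
  have hconv2 : StrictConvexOn ℝ (Set.Icc (z-δ) (z+δ)) g := by
    apply strictConvexOn_of_deriv2_pos (convex_Icc _ _) (hg.mono hsub2)
    intro y hy
    rw [interior_Icc] at hy
    have h := hsub y (Set.Ioo_subset_Icc_self hy)
    have : deriv^[2] g = deriv (deriv g) := by
      ext t; simp [Function.iterate_succ_apply']
    rw [this]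
    exact hconv y h.2 h.1
  have hmem1 : z - δ ∈ Set.Icc (z-δ) (z+δ) := by constructor <;> linarith
  have hmem2 : z + δ ∈ Set.Icc (z-δ) (z+δ) := by constructor <;> linarith
  have hne : z - δ ≠ z + δ := by intro h; linarith [h]
  have hkey := hconv2.2 hmem1 hmem2 hne (by norm_num : (0:ℝ) < 1/2)
    (by norm_num : (0:ℝ) < 1/2) (by norm_num)
  have hmid : (1/2 : ℝ) • (z - δ) + (1/2 : ℝ) • (z + δ) = z := by
    simp [smul_eq_mul]; ring
  rw [hmid] at hkey
  have ha : g (z - δ) ≤ g z := hzmax (hsub2 hmem1)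
  have hb : g (z + δ) ≤ g z := hzmax (hsub2 hmem2)
  simp only [smul_eq_mul] at hkey
  linarith


lemma first_integral (φ : ℝ → ℝ) (hφ : IsTWProfile φ) :
    ∀ x ∈ Set.Ioo (0:ℝ) (1/2),
      φ x * deriv (deriv φ) x = (deriv φ x)^2/2 + x - 1/2 := by
  obtain ⟨hC1, hC3, hpos, h0, h12, hd0, hode⟩ := hφ
  have hI : IsOpen (Set.Ioo (0:ℝ) (1/2)) := isOpen_Ioo
  set φ1 := deriv φ with hφ1def
  set φ2 := deriv φ1 with hφ2def
  set φ3 := deriv φ2 with hφ3def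
  have hd1 : ContDiffOn ℝ 2 φ1 (Set.Ioo (0:ℝ) (1/2)) :=
    hC3.deriv_of_isOpen hI (by norm_num)
  have hd2 : ContDiffOn ℝ 1 φ2 (Set.Ioo (0:ℝ) (1/2)) :=
    hd1.deriv_of_isOpen hI (by norm_num)
  have hD0 : ∀ x ∈ Set.Ioo (0:ℝ) (1/2), HasDerivAt φ (φ1 x) x := fun x hx =>
    ((hC3.differentiableOn (by norm_num)).differentiableAt (hI.mem_nhds hx)).hasDerivAt
  have hD1 : ∀ x ∈ Set.Ioo (0:ℝ) (1/2), HasDerivAt φ1 (φ2 x) x := fun x hx =>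
    ((hd1.differentiableOn (by norm_num)).differentiableAt (hI.mem_nhds hx)).hasDerivAt
  have hD2 : ∀ x ∈ Set.Ioo (0:ℝ) (1/2), HasDerivAt φ2 (φ3 x) x := fun x hx =>
    ((hd2.differentiableOn (by norm_num)).differentiableAt (hI.mem_nhds hx)).hasDerivAt
  set h : ℝ → ℝ := fun y => φ y * φ2 y - (φ1 y)^2/2 - y with hhdef
  have hH : ∀ x ∈ Set.Ioo (0:ℝ) (1/2), HasDerivAt h 0 x := by
    intro x hx
    have h1 := (hD0 x hx).mul (hD2 x hx)
    have h2 := ((hD1 x hx).pow 2).div_const 2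
    have h3 := (h1.sub h2).sub (hasDerivAt_id x)
    refine h3.congr_deriv ?_
    have hode' := hode x hx
    push_cast
    nlinarith [hode']
  -- constancy
  have key : ∀ a b : ℝ, a ∈ Set.Ioo (0:ℝ) (1/2) → b ∈ Set.Ioo (0:ℝ) (1/2) → a < b →
      h a = h b := by
    intro a b ha hb hab
    have hsub : Set.Icc a b ⊆ Set.Ioo (0:ℝ) (1/2) := fun y hy =>
      ⟨lt_of_lt_of_le ha.1 hy.1, lt_of_le_of_lt hy.2 hb.2⟩
    have hcont : ContinuousOn h (Set.Icc a b) := fun y hy =>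
      ((hH y (hsub hy)).continuousAt).continuousWithinAt
    obtain ⟨c, _, hc⟩ := exists_hasDerivAt_eq_slope h (fun _ => (0:ℝ)) hab hcont
      (fun y hy => hH y (hsub (Set.Ioo_subset_Icc_self hy)))
    have hba : b - a ≠ 0 := by intro hq; rw [sub_eq_zero] at hq; exact absurd hq.symm (ne_of_lt hab)
    have : h b - h a = 0 * (b - a) := (div_eq_iff hba).mp hc.symm
    rw [zero_mul] at this
    linarith
  have hmem14 : (1/4 : ℝ) ∈ Set.Ioo (0:ℝ) (1/2) := by norm_num
  have hconst : ∀ x ∈ Set.Ioo (0:ℝ) (1/2), h x = h (1/4) := by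
    intro x hx
    rcases lt_trichotomy x (1/4) with hlt | heq | hgt
    · exact key x (1/4) hx hmem14 hlt
    · rw [heq]
    · exact (key (1/4) x hmem14 hx hgt).symm
  -- now determine C := h (1/4) = -1/2
  have hCval : h (1/4) = -(1/2) := by
    by_contra hne
    set C := h (1/4) with hCdef
    have hL : C + 1/2 ≠ 0 := by
      intro hq
      exact hne (by linarith)
    set L := C + 1/2 with hLdef
    clear_value C
    clear_value L
    set F := 𝓝[Set.Ioo (0:ℝ) (1/2)] (0:ℝ) with hFdef
    have hFne : F.NeBot := by
      rw [hFdef]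
      apply mem_closure_iff_nhdsWithin_neBot.mp
      rw [closure_Ioo (by norm_num : (0:ℝ) ≠ 1/2)]
      exact ⟨le_refl 0, by norm_num⟩
    have hmemF : ∀ᶠ x in F, x ∈ Set.Ioo (0:ℝ) (1/2) := eventually_mem_nhdsWithin
    -- deriv φ tends to 1 at 0
    have hup : Tendsto φ1 F (𝓝 1) := by
      have hcd : ContinuousOn (derivWithin φ (Set.Icc 0 (1/2))) (Set.Icc 0 (1/2)) :=
        hC1.continuousOn_derivWithin (uniqueDiffOn_Icc (by norm_num)) (le_refl 1)
      have h1 : Tendsto (derivWithin φ (Set.Icc 0 (1/2))) (𝓝[Set.Icc 0 (1/2)] 0) (𝓝 1) := by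
        have h2 := hcd 0 (by constructor <;> norm_num)
        unfold ContinuousWithinAt at h2
        rwa [hd0] at h2
      have h2 : Tendsto (derivWithin φ (Set.Icc 0 (1/2))) F (𝓝 1) :=
        h1.mono_left (nhdsWithin_mono 0 Set.Ioo_subset_Icc_self)
      apply h2.congr'
      filter_upwards [hmemF] with x hx
      exact derivWithin_of_mem_nhds (Icc_mem_nhds hx.1 (lt_of_lt_of_le hx.2 (by norm_num)))
    -- slope tends to 1
    have hslope : Tendsto (fun x => φ x / x) F (𝓝 1) := by
      have hdiff : DifferentiableWithinAt ℝ φ (Set.Icc 0 (1/2)) 0 :=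
        (hC1.differentiableOn one_ne_zero) 0 (by constructor <;> norm_num)
      have hhd : HasDerivWithinAt φ 1 (Set.Icc 0 (1/2)) 0 := by
        have h2 := hdiff.hasDerivWithinAt
        rwa [hd0] at h2
      have h3 := hasDerivWithinAt_iff_tendsto_slope.mp hhd
      have hmono : F ≤ 𝓝[Set.Icc 0 (1/2) \ {0}] 0 := by
        apply nhdsWithin_mono
        intro y hy
        exact ⟨Set.Ioo_subset_Icc_self hy, fun hq => absurd (Set.mem_singleton_iff.mp hq) (ne_of_gt hy.1)⟩
      have h4 := h3.mono_left hmono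
      apply h4.congr'
      filter_upwards [hmemF] with x hx
      rw [slope_def_field, h0, sub_zero, sub_zero]
    have hφlt : ∀ᶠ x in F, φ x < 2*x := by
      have h2 : ∀ᶠ x in F, φ x / x < 2 := hslope.eventually_lt_const (by norm_num)
      filter_upwards [h2, hmemF] with x hx1 hx2
      have h3 := (div_lt_iff₀ hx2.1).mp hx1
      linarith
    have hNt : Tendsto (fun x => x + C + (φ1 x)^2/2) F (𝓝 L) := by
      have hid : Tendsto (fun x : ℝ => x) F (𝓝 0) := tendsto_id.mono_left nhdsWithin_le_nhds
      have h2 := ((hid.add_const C).add ((hup.pow 2).div_const 2))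
      have h3 : (0:ℝ) + C + 1^2/2 = L := by rw [hLdef]; ring
      rw [h3] at h2
      exact h2.congr (fun x => by ring)
    -- in either sign case, derive a contradiction
    rcases hL.lt_or_gt with hLneg | hLpos
    · -- L < 0 : φ2 x ≤ L/(4x) near 0, so φ1 blows up to +∞
      have hN2 : ∀ᶠ x in F, x + C + (φ1 x)^2/2 ≤ L/2 := by
        have h2 := hNt.eventually_lt_const (show L < L/2 by linarith)
        filter_upwards [h2] with x hx; linarith
      have hkey : ∀ᶠ x in F, φ2 x ≤ L/(4*x) := by
        filter_upwards [hN2, hφlt, hmemF] with x h1 h2 h3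
        have hφp := hpos x h3
        have hx0 : 0 < x := h3.1
        have hphi2 : φ2 x = (x + C + (φ1 x)^2/2) / φ x := by
          have hc := hconst x h3
          rw [eq_div_iff hφp.ne']
          simp only [hhdef] at hc
          linarith
        rw [hphi2, div_le_div_iff₀ hφp (by positivity)]
        have e1 : (L/2 - (x + C + (φ1 x)^2/2)) * (4*x) ≥ 0 :=
          mul_nonneg (by linarith) (by linarith)
        have e2 : (2*x - φ x) * L ≤ 0 :=
          mul_nonpos_of_nonneg_of_nonpos (by linarith) (by linarith)
        nlinarith [e1, e2]
      obtain ⟨ε, hε, hball⟩ := Metric.mem_nhdsWithin_iff.mp hkey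
      set δ := min (ε/2) (1/4) with hδdef
      have hδpos : 0 < δ := by positivity
      have hδI : δ ∈ Set.Ioo (0:ℝ) (1/2) := by
        constructor
        · exact hδpos
        · calc δ ≤ 1/4 := min_le_right _ _
            _ < 1/2 := by norm_num
      have hP : ∀ x ∈ Set.Ioc (0:ℝ) δ, φ2 x ≤ L/(4*x) := by
        intro x hx
        have hxI : x ∈ Set.Ioo (0:ℝ) (1/2) := ⟨hx.1, lt_of_le_of_lt hx.2 hδI.2⟩
        apply hball
        refine ⟨?_, hxI⟩
        rw [Metric.mem_ball, Real.dist_eq, sub_zero, abs_of_pos hx.1]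
        calc x ≤ δ := hx.2
          _ ≤ ε/2 := min_le_left _ _
          _ < ε := by linarith
      have hFTC : ∀ a ∈ Set.Ioo (0:ℝ) δ, φ1 δ - L/4 * (Real.log δ - Real.log a) ≤ φ1 a := by
        intro a ha
        have haδ : a ≤ δ := ha.2.le
        have hsubI : Set.Icc a δ ⊆ Set.Ioo (0:ℝ) (1/2) := fun y hy =>
          ⟨lt_of_lt_of_le ha.1 hy.1, lt_of_le_of_lt hy.2 hδI.2⟩
        have hder : ∀ y ∈ Set.uIcc a δ, HasDerivAt φ1 (φ2 y) y := by
          intro y hy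
          rw [Set.uIcc_of_le haδ] at hy
          exact hD1 y (hsubI hy)
        have hcont2 : ContinuousOn φ2 (Set.Icc a δ) := (hd2.continuousOn).mono hsubI
        have hint : IntervalIntegrable φ2 MeasureTheory.volume a δ := by
          apply ContinuousOn.intervalIntegrable
          rwa [Set.uIcc_of_le haδ]
        have heq : (∫ y in a..δ, φ2 y) = φ1 δ - φ1 a :=
          intervalIntegral.integral_eq_sub_of_hasDerivAt hder hint
        have hcont3 : ContinuousOn (fun y => L/(4*y)) (Set.Icc a δ) := by
          apply ContinuousOn.div continuousOn_const (by fun_prop)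
          intro y hy
          have : 0 < y := lt_of_lt_of_le ha.1 hy.1
          positivity
        have hint3 : IntervalIntegrable (fun y => L/(4*y)) MeasureTheory.volume a δ := by
          apply ContinuousOn.intervalIntegrable
          rwa [Set.uIcc_of_le haδ]
        have hmono2 := intervalIntegral.integral_mono_on haδ hint hint3
          (fun y hy => hP y ⟨lt_of_lt_of_le ha.1 hy.1, hy.2⟩)
        have hcalc : (∫ y in a..δ, L/(4*y)) = L/4 * (Real.log δ - Real.log a) := by
          have hrw : ∀ y : ℝ, L/(4*y) = (L/4) * (1/y) := fun y => by ring
          simp_rw [hrw]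
          rw [intervalIntegral.integral_const_mul, integral_one_div, Real.log_div hδI.1.ne' ha.1.ne']
          rw [Set.uIcc_of_le haδ]
          intro hq
          exact absurd rfl (ne_of_gt (lt_of_lt_of_le ha.1 hq.1))
        rw [heq, hcalc] at hmono2
        linarith
      have hloga : Tendsto (fun a : ℝ => φ1 δ - L/4 * (Real.log δ - Real.log a)) F atTop := by
        have h1 : Tendsto Real.log F atBot :=
          Real.tendsto_log_nhdsGT_zero.mono_left
            (nhdsWithin_mono 0 Set.Ioo_subset_Ioi_self)
        have h2 : Tendsto (fun a : ℝ => (L/4) * Real.log a) F atTop :=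
          h1.const_mul_atBot_of_neg (by linarith)
        have h3 := tendsto_atTop_add_const_left F (φ1 δ - L/4 * Real.log δ) h2
        apply h3.congr
        intro a; ring
      have hev1 : ∀ᶠ a in F, (2:ℝ) < φ1 δ - L/4 * (Real.log δ - Real.log a) :=
        hloga.eventually (eventually_gt_atTop 2)
      have hev2 : ∀ᶠ a in F, φ1 a < 2 := hup.eventually_lt_const (by norm_num)
      have hev3 : ∀ᶠ a in F, a < δ := (eventually_lt_nhds hδpos).filter_mono nhdsWithin_le_nhds
      obtain ⟨a, ha1, ha2, ha3, ha4⟩ := (hev1.and (hev2.and (hev3.and hmemF))).exists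
      have h5 := hFTC a ⟨ha4.1, ha3⟩
      linarith
    · -- 0 < L : φ2 x ≥ L/(4x) near 0, so φ1 blows up to -∞
      have hN2 : ∀ᶠ x in F, L/2 ≤ x + C + (φ1 x)^2/2 := by
        have h2 := hNt.eventually_const_lt (show L/2 < L by linarith)
        filter_upwards [h2] with x hx; linarith
      have hkey : ∀ᶠ x in F, L/(4*x) ≤ φ2 x := by
        filter_upwards [hN2, hφlt, hmemF] with x h1 h2 h3
        have hφp := hpos x h3
        have hx0 : 0 < x := h3.1
        have hphi2 : φ2 x = (x + C + (φ1 x)^2/2) / φ x := by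
          have hc := hconst x h3
          rw [eq_div_iff hφp.ne']
          simp only [hhdef] at hc
          linarith
        rw [hphi2, div_le_div_iff₀ (by positivity) hφp]
        have e1 : ((x + C + (φ1 x)^2/2) - L/2) * (4*x) ≥ 0 :=
          mul_nonneg (by linarith) (by linarith)
        have e2 : (2*x - φ x) * L ≥ 0 :=
          mul_nonneg (by linarith) (by linarith)
        nlinarith [e1, e2]
      obtain ⟨ε, hε, hball⟩ := Metric.mem_nhdsWithin_iff.mp hkey
      set δ := min (ε/2) (1/4) with hδdef
      have hδpos : 0 < δ := by positivity
      have hδI : δ ∈ Set.Ioo (0:ℝ) (1/2) := by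
        constructor
        · exact hδpos
        · calc δ ≤ 1/4 := min_le_right _ _
            _ < 1/2 := by norm_num
      have hP : ∀ x ∈ Set.Ioc (0:ℝ) δ, L/(4*x) ≤ φ2 x := by
        intro x hx
        have hxI : x ∈ Set.Ioo (0:ℝ) (1/2) := ⟨hx.1, lt_of_le_of_lt hx.2 hδI.2⟩
        apply hball
        refine ⟨?_, hxI⟩
        rw [Metric.mem_ball, Real.dist_eq, sub_zero, abs_of_pos hx.1]
        calc x ≤ δ := hx.2
          _ ≤ ε/2 := min_le_left _ _
          _ < ε := by linarith
      have hFTC : ∀ a ∈ Set.Ioo (0:ℝ) δ, φ1 a ≤ φ1 δ - L/4 * (Real.log δ - Real.log a) := by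
        intro a ha
        have haδ : a ≤ δ := ha.2.le
        have hsubI : Set.Icc a δ ⊆ Set.Ioo (0:ℝ) (1/2) := fun y hy =>
          ⟨lt_of_lt_of_le ha.1 hy.1, lt_of_le_of_lt hy.2 hδI.2⟩
        have hder : ∀ y ∈ Set.uIcc a δ, HasDerivAt φ1 (φ2 y) y := by
          intro y hy
          rw [Set.uIcc_of_le haδ] at hy
          exact hD1 y (hsubI hy)
        have hcont2 : ContinuousOn φ2 (Set.Icc a δ) := (hd2.continuousOn).mono hsubI
        have hint : IntervalIntegrable φ2 MeasureTheory.volume a δ := by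
          apply ContinuousOn.intervalIntegrable
          rwa [Set.uIcc_of_le haδ]
        have heq : (∫ y in a..δ, φ2 y) = φ1 δ - φ1 a :=
          intervalIntegral.integral_eq_sub_of_hasDerivAt hder hint
        have hcont3 : ContinuousOn (fun y => L/(4*y)) (Set.Icc a δ) := by
          apply ContinuousOn.div continuousOn_const (by fun_prop)
          intro y hy
          have : 0 < y := lt_of_lt_of_le ha.1 hy.1
          positivity
        have hint3 : IntervalIntegrable (fun y => L/(4*y)) MeasureTheory.volume a δ := by
          apply ContinuousOn.intervalIntegrable
          rwa [Set.uIcc_of_le haδ]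
        have hmono2 := intervalIntegral.integral_mono_on haδ hint3 hint
          (fun y hy => hP y ⟨lt_of_lt_of_le ha.1 hy.1, hy.2⟩)
        have hcalc : (∫ y in a..δ, L/(4*y)) = L/4 * (Real.log δ - Real.log a) := by
          have hrw : ∀ y : ℝ, L/(4*y) = (L/4) * (1/y) := fun y => by ring
          simp_rw [hrw]
          rw [intervalIntegral.integral_const_mul, integral_one_div, Real.log_div hδI.1.ne' ha.1.ne']
          rw [Set.uIcc_of_le haδ]
          intro hq
          exact absurd rfl (ne_of_gt (lt_of_lt_of_le ha.1 hq.1))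
        rw [heq, hcalc] at hmono2
        linarith
      have hloga : Tendsto (fun a : ℝ => φ1 δ - L/4 * (Real.log δ - Real.log a)) F atBot := by
        have h1 : Tendsto Real.log F atBot :=
          Real.tendsto_log_nhdsGT_zero.mono_left
            (nhdsWithin_mono 0 Set.Ioo_subset_Ioi_self)
        have h2 : Tendsto (fun a : ℝ => (L/4) * Real.log a) F atBot :=
          h1.const_mul_atBot (by linarith)
        have h3 := tendsto_atBot_add_const_left F (φ1 δ - L/4 * Real.log δ) h2
        apply h3.congr
        intro a; ring
      have hev1 : ∀ᶠ a in F, φ1 δ - L/4 * (Real.log δ - Real.log a) < 1/2 :=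
        hloga.eventually (eventually_lt_atBot (1/2))
      have hev2 : ∀ᶠ a in F, (1/2:ℝ) < φ1 a := hup.eventually_const_lt (by norm_num)
      have hev3 : ∀ᶠ a in F, a < δ := (eventually_lt_nhds hδpos).filter_mono nhdsWithin_le_nhds
      obtain ⟨a, ha1, ha2, ha3, ha4⟩ := (hev1.and (hev2.and (hev3.and hmemF))).exists
      have h5 := hFTC a ⟨ha4.1, ha3⟩
      linarith
  intro x hx
  have := hconst x hx
  rw [hCval] at this
  simp only [hhdef] at this
  linarith


noncomputable def Wfn (c : ℝ) : ℝ → ℝ :=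
  fun x => c * (x ^ ((1:ℝ)/2) * (1/2 - x) ^ ((3:ℝ)/4))
noncomputable def Wfn1 (c : ℝ) : ℝ → ℝ :=
  fun x => c * ((2*(1/2 - x) - 3*x) / (4 * (x ^ ((1:ℝ)/2) * (1/2 - x) ^ ((1:ℝ)/4))))
noncomputable def Wfn2 (c : ℝ) : ℝ → ℝ :=
  fun x => -c * ((4*(1/2-x)^2 + 12*x*(1/2-x) + 3*x^2) /
    (16 * (x ^ ((3:ℝ)/2) * (1/2 - x) ^ ((5:ℝ)/4))))

lemma W_hasDeriv (c : ℝ) (x : ℝ) (hx : x ∈ Set.Ioo (0:ℝ) (1/2)) :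
    HasDerivAt (Wfn c) (Wfn1 c x) x ∧ HasDerivAt (Wfn1 c) (Wfn2 c x) x := by
  obtain ⟨hx0, hx2⟩ := hx
  have hs : 0 < 1/2 - x := by linarith
  set a := x ^ ((1:ℝ)/2) with hadef
  set b := (1/2 - x) ^ ((1:ℝ)/4) with hbdef
  have ha : 0 < a := Real.rpow_pos_of_pos hx0 _
  have hb : 0 < b := Real.rpow_pos_of_pos hs _
  have ha2 : a^2 = x := by
    rw [hadef, ← Real.rpow_natCast (x ^ ((1:ℝ)/2)) 2, ← Real.rpow_mul hx0.le]; norm_num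
  have hb4 : b^4 = 1/2 - x := by
    rw [hbdef, ← Real.rpow_natCast _ 4, ← Real.rpow_mul hs.le]; norm_num
  have e1 : x ^ ((1:ℝ)/2 - 1) = a⁻¹ := by
    rw [show ((1:ℝ)/2 - 1) = -((1:ℝ)/2) by norm_num, Real.rpow_neg hx0.le]
  have e2 : (1/2 - x) ^ ((3:ℝ)/4) = b^3 := by
    rw [hbdef, ← Real.rpow_natCast _ 3, ← Real.rpow_mul hs.le]; norm_num
  have e3 : (1/2 - x) ^ ((3:ℝ)/4 - 1) = b⁻¹ := by
    rw [show ((3:ℝ)/4 - 1) = -((1:ℝ)/4) by norm_num, Real.rpow_neg hs.le, hbdef]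
  have e4 : (1/2 - x) ^ ((1:ℝ)/4 - 1) = (b^3)⁻¹ := by
    rw [show ((1:ℝ)/4 - 1) = -((3:ℝ)/4) by norm_num, Real.rpow_neg hs.le, e2]
  have e5 : x ^ ((3:ℝ)/2) = a^3 := by
    rw [hadef, ← Real.rpow_natCast (x ^ ((1:ℝ)/2)) 3, ← Real.rpow_mul hx0.le]; norm_num
  have e6 : (1/2 - x) ^ ((5:ℝ)/4) = b^5 := by
    rw [hbdef, ← Real.rpow_natCast _ 5, ← Real.rpow_mul hs.le]; norm_num
  clear_value a b
  have hA : HasDerivAt (fun y : ℝ => y ^ ((1:ℝ)/2)) ((1:ℝ)/2 * x ^ ((1:ℝ)/2 - 1)) x :=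
    Real.hasDerivAt_rpow_const (Or.inl hx0.ne')
  have hBin : HasDerivAt (fun y : ℝ => 1/2 - y) (-1) x := by
    simpa using (hasDerivAt_id x).const_sub ((1:ℝ)/2)
  constructor
  · have hB3 : HasDerivAt (fun y : ℝ => (1/2 - y) ^ ((3:ℝ)/4))
        (-1 * ((3:ℝ)/4) * (1/2 - x) ^ ((3:ℝ)/4 - 1)) x :=
      hBin.rpow_const (Or.inl hs.ne')
    have hprod := (hA.mul hB3).const_mul c
    have : HasDerivAt (Wfn c)
        (c * ((1:ℝ)/2 * x ^ ((1:ℝ)/2 - 1) * ((1/2 - x) ^ ((3:ℝ)/4)) +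
          x ^ ((1:ℝ)/2) * (-1 * ((3:ℝ)/4) * (1/2 - x) ^ ((3:ℝ)/4 - 1)))) x := by
      unfold Wfn; exact hprod
    convert this using 1
    rw [e1, e2, e3]
    unfold Wfn1
    rw [show (2*(1/2 - x) - 3*x) = 2*b^4 - 3*a^2 by rw [ha2, hb4]]
    rw [← hadef, ← hbdef]
    field_simp [ha.ne', hb.ne']
    ring
  · have hB1 : HasDerivAt (fun y : ℝ => (1/2 - y) ^ ((1:ℝ)/4))
        (-1 * ((1:ℝ)/4) * (1/2 - x) ^ ((1:ℝ)/4 - 1)) x :=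
      hBin.rpow_const (Or.inl hs.ne')
    have hnum : HasDerivAt (fun y : ℝ => 2*(1/2 - y) - 3*y) (-5) x := by
      have h := ((hasDerivAt_const x ((1:ℝ)/2)).sub (hasDerivAt_id x)).const_mul 2
      have h2 := (hasDerivAt_id x).const_mul 3
      have h3 := h.sub h2
      refine h3.congr_deriv ?_; norm_num
    have hden : HasDerivAt (fun y : ℝ => 4 * (y ^ ((1:ℝ)/2) * (1/2 - y) ^ ((1:ℝ)/4)))
        (4 * ((1:ℝ)/2 * x ^ ((1:ℝ)/2 - 1) * ((1/2 - x) ^ ((1:ℝ)/4)) +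
          x ^ ((1:ℝ)/2) * (-1 * ((1:ℝ)/4) * (1/2 - x) ^ ((1:ℝ)/4 - 1)))) x :=
      (hA.mul hB1).const_mul 4
    have hdenne : 4 * (x ^ ((1:ℝ)/2) * (1/2 - x) ^ ((1:ℝ)/4)) ≠ 0 := by
      rw [← hadef, ← hbdef]; positivity
    have hdiv := (hnum.div hden hdenne).const_mul c
    have : HasDerivAt (Wfn1 c)
        ((c : ℝ) * ((-5 * (4 * (x ^ ((1:ℝ)/2) * (1/2 - x) ^ ((1:ℝ)/4))) -
          (2*(1/2 - x) - 3*x) * (4 * ((1:ℝ)/2 * x ^ ((1:ℝ)/2 - 1) * ((1/2 - x) ^ ((1:ℝ)/4)) +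
          x ^ ((1:ℝ)/2) * (-1 * ((1:ℝ)/4) * (1/2 - x) ^ ((1:ℝ)/4 - 1))))) /
          (4 * (x ^ ((1:ℝ)/2) * (1/2 - x) ^ ((1:ℝ)/4)))^2)) x := by
      unfold Wfn1; exact hdiv
    convert this using 1
    rw [e1, e4]
    unfold Wfn2
    rw [e5, e6]
    rw [show (2*(1/2 - x) - 3*x) = 2*b^4 - 3*a^2 by rw [ha2, hb4]]
    rw [show (4*(1/2-x)^2 + 12*x*(1/2-x) + 3*x^2)
        = 4*(b^4)^2 + 12*(a^2)*(b^4) + 3*(a^2)^2 by rw [ha2, hb4]]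
    rw [← hadef, ← hbdef]
    field_simp [ha.ne', hb.ne']
    ring

lemma w_hasDeriv1 (φ : ℝ → ℝ) {x : ℝ} (hφx : 0 < φ x) (hd : HasDerivAt φ (deriv φ x) x) :
    HasDerivAt (fun y => Real.sqrt (φ y)) (deriv φ x / (2 * Real.sqrt (φ x))) x := by
  have h := (Real.hasDerivAt_sqrt hφx.ne').comp x hd
  refine h.congr_deriv ?_
  ring

lemma w_hasDeriv2 (φ : ℝ → ℝ) {x : ℝ} (hφx : 0 < φ x)
    (hd : HasDerivAt φ (deriv φ x) x) (hd2 : HasDerivAt (deriv φ) (deriv (deriv φ) x) x)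
    (hfi : φ x * deriv (deriv φ) x = (deriv φ x)^2/2 + x - 1/2) :
    HasDerivAt (fun y => deriv φ y / (2 * Real.sqrt (φ y)))
      (-(1/2 - x) / (2 * Real.sqrt (φ x)^3)) x := by
  have hsq : HasDerivAt (fun y => Real.sqrt (φ y)) (deriv φ x / (2 * Real.sqrt (φ x))) x :=
    w_hasDeriv1 φ hφx hd
  have hden := hsq.const_mul (2:ℝ)
  have hr : 0 < Real.sqrt (φ x) := Real.sqrt_pos.mpr hφx
  have hne : 2 * Real.sqrt (φ x) ≠ 0 := by positivity
  have h := hd2.div hden hne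
  refine h.congr_deriv ?_
  have hr2 : Real.sqrt (φ x)^2 = φ x := Real.sq_sqrt hφx.le
  set r := Real.sqrt (φ x) with hrdef
  clear_value r
  rw [← hr2] at hfi
  field_simp
  linear_combination 2 * hfi

lemma key_upper {c x r : ℝ} (hx : x ∈ Set.Ioo (0:ℝ) (1/2)) (hc : 0 < c) (hc4 : c^4 = 32/3)
    (hr : Wfn c x < r) :
    0 < -(1/2 - x)/(2*r^3) - Wfn2 c x := by
  obtain ⟨hx0, hx2⟩ := hx
  have hs : 0 < 1/2 - x := by linarith
  set a := x ^ ((1:ℝ)/2) with hadef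
  set b := (1/2 - x) ^ ((1:ℝ)/4) with hbdef
  have ha : 0 < a := Real.rpow_pos_of_pos hx0 _
  have hb : 0 < b := Real.rpow_pos_of_pos hs _
  have ha2 : a^2 = x := by
    rw [hadef, ← Real.rpow_natCast (x ^ ((1:ℝ)/2)) 2, ← Real.rpow_mul hx0.le]; norm_num
  have hb4 : b^4 = 1/2 - x := by
    rw [hbdef, ← Real.rpow_natCast _ 4, ← Real.rpow_mul hs.le]; norm_num
  have e2 : (1/2 - x) ^ ((3:ℝ)/4) = b^3 := by
    rw [hbdef, ← Real.rpow_natCast _ 3, ← Real.rpow_mul hs.le]; norm_num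
  have e5 : x ^ ((3:ℝ)/2) = a^3 := by
    rw [hadef, ← Real.rpow_natCast (x ^ ((1:ℝ)/2)) 3, ← Real.rpow_mul hx0.le]; norm_num
  have e6 : (1/2 - x) ^ ((5:ℝ)/4) = b^5 := by
    rw [hbdef, ← Real.rpow_natCast _ 5, ← Real.rpow_mul hs.le]; norm_num
  clear_value a b
  have hW : Wfn c x = c*(a*b^3) := by unfold Wfn; rw [e2, ← hadef]
  have hWpos : 0 < c*(a*b^3) := by positivity
  have hrpos : 0 < r := lt_trans hWpos (hW ▸ hr)
  have hr3 : (c*(a*b^3))^3 < r^3 := by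
    apply pow_lt_pow_left₀ (hW ▸ hr) hWpos.le
    norm_num
  have hWfn2 : Wfn2 c x
      = -(c*((4*(b^4)^2 + 12*a^2*b^4 + 3*(a^2)^2)/(16*(a^3*b^5)))) := by
    unfold Wfn2
    rw [e5, e6, show (4*(1/2-x)^2 + 12*x*(1/2-x) + 3*x^2)
        = 4*(b^4)^2 + 12*(a^2)*(b^4) + 3*(a^2)^2 by rw [ha2, hb4]]
    ring
  have h1 : (1/2 - x)/(2*r^3) < (1/2 - x)/(2*(c*(a*b^3))^3) :=
    div_lt_div_of_pos_left hs (by positivity) (by nlinarith [hr3])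
  have hP : (3:ℝ)/4 ≤ 4*(b^4)^2 + 12*a^2*b^4 + 3*(a^2)^2 := by
    have hrel : a^2 + b^4 = 1/2 := by rw [ha2, hb4]; ring
    nlinarith [hrel, sq_nonneg (b^4), mul_nonneg (sq_nonneg a) (sq_nonneg (b^2))]
  have hABpos : 0 < a^3*b^9 := by positivity
  set Q := 4*(b^4)^2 + 12*a^2*b^4 + 3*(a^2)^2 with hQdef
  have h2 : (1/2 - x)/(2*(c*(a*b^3))^3) ≤ c*(Q/(16*(a^3*b^5))) := by
    rw [show (1/2 - x) = b^4 from hb4.symm, ← mul_div_assoc,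
      div_le_div_iff₀ (by positivity) (by positivity)]
    calc b^4*(16*(a^3*b^5)) = 16*(a^3*b^9) := by ring
      _ ≤ (64/3*Q)*(a^3*b^9) := by nlinarith [hP, hABpos]
      _ = (c*Q)*(2*(c*(a*b^3))^3) := by
          have e : (c*Q)*(2*(c*(a*b^3))^3) = c^4*(2*(Q*(a^3*b^9))) := by ring
          rw [e, hc4]; ring
  rw [hWfn2]
  have hrr : 0 < 2*r^3 := by positivity
  have h3 : -(1/2 - x)/(2*r^3) = -((1/2 - x)/(2*r^3)) := by ring
  rw [h3]
  linarith [h1, h2]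

lemma key_lower {c x r : ℝ} (hx : x ∈ Set.Ioo (0:ℝ) (1/2)) (hc : 0 < c) (hc4 : c^4 = 32/9)
    (hr0 : 0 < r) (hr : r < Wfn c x) :
    0 < Wfn2 c x + (1/2 - x)/(2*r^3) := by
  obtain ⟨hx0, hx2⟩ := hx
  have hs : 0 < 1/2 - x := by linarith
  set a := x ^ ((1:ℝ)/2) with hadef
  set b := (1/2 - x) ^ ((1:ℝ)/4) with hbdef
  have ha : 0 < a := Real.rpow_pos_of_pos hx0 _
  have hb : 0 < b := Real.rpow_pos_of_pos hs _
  have ha2 : a^2 = x := by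
    rw [hadef, ← Real.rpow_natCast (x ^ ((1:ℝ)/2)) 2, ← Real.rpow_mul hx0.le]; norm_num
  have hb4 : b^4 = 1/2 - x := by
    rw [hbdef, ← Real.rpow_natCast _ 4, ← Real.rpow_mul hs.le]; norm_num
  have e2 : (1/2 - x) ^ ((3:ℝ)/4) = b^3 := by
    rw [hbdef, ← Real.rpow_natCast _ 3, ← Real.rpow_mul hs.le]; norm_num
  have e5 : x ^ ((3:ℝ)/2) = a^3 := by
    rw [hadef, ← Real.rpow_natCast (x ^ ((1:ℝ)/2)) 3, ← Real.rpow_mul hx0.le]; norm_num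
  have e6 : (1/2 - x) ^ ((5:ℝ)/4) = b^5 := by
    rw [hbdef, ← Real.rpow_natCast _ 5, ← Real.rpow_mul hs.le]; norm_num
  clear_value a b
  have hW : Wfn c x = c*(a*b^3) := by unfold Wfn; rw [e2, ← hadef]
  have hWpos : 0 < c*(a*b^3) := by positivity
  have hr3 : r^3 < (c*(a*b^3))^3 := by
    apply pow_lt_pow_left₀ (hW ▸ hr) hr0.le
    norm_num
  have hWfn2 : Wfn2 c x
      = -(c*((4*(b^4)^2 + 12*a^2*b^4 + 3*(a^2)^2)/(16*(a^3*b^5)))) := by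
    unfold Wfn2
    rw [e5, e6, show (4*(1/2-x)^2 + 12*x*(1/2-x) + 3*x^2)
        = 4*(b^4)^2 + 12*(a^2)*(b^4) + 3*(a^2)^2 by rw [ha2, hb4]]
    ring
  have h1 : (1/2 - x)/(2*(c*(a*b^3))^3) < (1/2 - x)/(2*r^3) :=
    div_lt_div_of_pos_left hs (by positivity) (by nlinarith [hr3])
  have hP : 4*(b^4)^2 + 12*a^2*b^4 + 3*(a^2)^2 ≤ (9:ℝ)/4 := by
    have hrel : a^2 + b^4 = 1/2 := by rw [ha2, hb4]; ring
    nlinarith [hrel, sq_nonneg (b^4), mul_nonneg (sq_nonneg a) (sq_nonneg (b^2)), sq_nonneg (a^2)]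
  have hABpos : 0 < a^3*b^9 := by positivity
  set Q := 4*(b^4)^2 + 12*a^2*b^4 + 3*(a^2)^2 with hQdef
  have h2 : c*(Q/(16*(a^3*b^5))) ≤ (1/2 - x)/(2*(c*(a*b^3))^3) := by
    rw [show (1/2 - x) = b^4 from hb4.symm, ← mul_div_assoc,
      div_le_div_iff₀ (by positivity) (by positivity)]
    calc (c*Q)*(2*(c*(a*b^3))^3) = c^4*(2*(Q*(a^3*b^9))) := by ring
      _ = 64/9*Q*(a^3*b^9) := by rw [hc4]; ring
      _ ≤ 16*(a^3*b^9) := by nlinarith [hP, hABpos]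
      _ = b^4*(16*(a^3*b^5)) := by ring
  rw [hWfn2]
  linarith [h1, h2]

lemma Wfn_contOn (c : ℝ) : ContinuousOn (Wfn c) (Set.Icc 0 (1/2)) := by
  unfold Wfn
  apply ContinuousOn.mul continuousOn_const
  apply ContinuousOn.mul
  · intro x _
    exact (Real.continuousAt_rpow_const x _ (Or.inr (by norm_num))).continuousWithinAt
  · intro x _
    apply ContinuousWithinAt.comp (t := Set.univ)
      (Real.continuousAt_rpow_const (1/2 - x) _ (Or.inr (by norm_num))).continuousWithinAt
    · exact ((continuous_const.sub continuous_id).continuousAt).continuousWithinAt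
    · intro y _; trivial

lemma Wfn_zero (c : ℝ) : Wfn c 0 = 0 := by
  unfold Wfn
  rw [Real.zero_rpow (by norm_num)]
  ring

lemma Wfn_half (c : ℝ) : Wfn c (1/2) = 0 := by
  unfold Wfn
  rw [show ((1:ℝ)/2 - 1/2 : ℝ) = 0 by norm_num, Real.zero_rpow (by norm_num)]
  ring

lemma Wfn_nonneg {c : ℝ} (hc : 0 ≤ c) (x : ℝ) (hx : x ∈ Set.Icc (0:ℝ) (1/2)) :
    0 ≤ Wfn c x := by
  unfold Wfn
  have h1 : (0:ℝ) ≤ x ^ ((1:ℝ)/2) := Real.rpow_nonneg hx.1 _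
  have h2 : (0:ℝ) ≤ (1/2 - x) ^ ((3:ℝ)/4) := Real.rpow_nonneg (by linarith [hx.2]) _
  positivity

lemma Wfn_sq (c : ℝ) (x : ℝ) (hx : x ∈ Set.Icc (0:ℝ) (1/2)) :
    (Wfn c x)^2 = c^2 * (x * (1/2 - x) ^ ((3:ℝ)/2)) := by
  unfold Wfn
  have hx0 : (0:ℝ) ≤ x := hx.1
  have hs : (0:ℝ) ≤ 1/2 - x := by linarith [hx.2]
  have e1 : (x ^ ((1:ℝ)/2))^2 = x := by
    rw [← Real.rpow_natCast (x ^ ((1:ℝ)/2)) 2, ← Real.rpow_mul hx0]; norm_num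
  have e2 : ((1/2 - x) ^ ((3:ℝ)/4))^2 = (1/2 - x) ^ ((3:ℝ)/2) := by
    rw [← Real.rpow_natCast ((1/2 - x) ^ ((3:ℝ)/4)) 2, ← Real.rpow_mul hs]; norm_num
  calc (c * (x ^ ((1:ℝ)/2) * (1/2 - x) ^ ((3:ℝ)/4)))^2
      = c^2 * ((x ^ ((1:ℝ)/2))^2 * ((1/2 - x) ^ ((3:ℝ)/4))^2) := by ring
    _ = c^2 * (x * (1/2 - x) ^ ((3:ℝ)/2)) := by rw [e1, e2]


/-- Theorem 2: explicit lower and upper bounds (2.5) for the traveling-wave profile: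
`(4√2/3)·η·(1/2 − η)^{3/2} ≤ φ(η) ≤ (4√6/3)·η·(1/2 − η)^{3/2}` on `[0,1/2]`. -/
theorem traveling_wave_bounds (φ : ℝ → ℝ) (hφ : IsTWProfile φ) :
    ∀ η ∈ Set.Icc (0:ℝ) (1/2),
      (4 * Real.sqrt 2 / 3) * η * (1/2 - η) ^ ((3:ℝ)/2) ≤ φ η ∧
      φ η ≤ (4 * Real.sqrt 6 / 3) * η * (1/2 - η) ^ ((3:ℝ)/2) := by
  have hfi := first_integral φ hφ
  obtain ⟨hC1, hC3, hpos, h0, h12, hd0, hode⟩ := hφ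
  have hI : IsOpen (Set.Ioo (0:ℝ) (1/2)) := isOpen_Ioo
  have hd1 : ContDiffOn ℝ 2 (deriv φ) (Set.Ioo (0:ℝ) (1/2)) :=
    hC3.deriv_of_isOpen hI (by norm_num)
  have hD0 : ∀ x ∈ Set.Ioo (0:ℝ) (1/2), HasDerivAt φ (deriv φ x) x := fun x hx =>
    ((hC3.differentiableOn (by norm_num)).differentiableAt (hI.mem_nhds hx)).hasDerivAt
  have hD1 : ∀ x ∈ Set.Ioo (0:ℝ) (1/2), HasDerivAt (deriv φ) (deriv (deriv φ) x) x :=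
    fun x hx =>
    ((hd1.differentiableOn (by norm_num)).differentiableAt (hI.mem_nhds hx)).hasDerivAt
  have hw1 : ∀ x ∈ Set.Ioo (0:ℝ) (1/2),
      HasDerivAt (fun y => Real.sqrt (φ y)) (deriv φ x / (2 * Real.sqrt (φ x))) x :=
    fun x hx => w_hasDeriv1 φ (hpos x hx) (hD0 x hx)
  have hw2 : ∀ x ∈ Set.Ioo (0:ℝ) (1/2),
      HasDerivAt (fun y => deriv φ y / (2 * Real.sqrt (φ y)))
        (-(1/2 - x) / (2 * Real.sqrt (φ x)^3)) x :=
    fun x hx => w_hasDeriv2 φ (hpos x hx) (hD0 x hx) (hD1 x hx) (hfi x hx)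
  have hwc : ContinuousOn (fun y => Real.sqrt (φ y)) (Set.Icc 0 (1/2)) :=
    Real.continuous_sqrt.comp_continuousOn hC1.continuousOn
  -- the two comparison constants
  have hc2pos : (0:ℝ) < Real.sqrt (4 * Real.sqrt 6 / 3) := Real.sqrt_pos.mpr (by positivity)
  have hc2_4 : (Real.sqrt (4 * Real.sqrt 6 / 3))^4 = 32/3 := by
    have h6 : (0:ℝ) ≤ 4 * Real.sqrt 6 / 3 := by positivity
    rw [show (Real.sqrt (4 * Real.sqrt 6 / 3))^4
        = ((Real.sqrt (4 * Real.sqrt 6 / 3))^2)^2 by ring, Real.sq_sqrt h6,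
      show (4 * Real.sqrt 6 / 3)^2 = 16/9 * (Real.sqrt 6^2) by ring,
      Real.sq_sqrt (by norm_num : (0:ℝ) ≤ 6)]
    norm_num
  have hc1pos : (0:ℝ) < Real.sqrt (4 * Real.sqrt 2 / 3) := Real.sqrt_pos.mpr (by positivity)
  have hc1_4 : (Real.sqrt (4 * Real.sqrt 2 / 3))^4 = 32/9 := by
    have h2 : (0:ℝ) ≤ 4 * Real.sqrt 2 / 3 := by positivity
    rw [show (Real.sqrt (4 * Real.sqrt 2 / 3))^4
        = ((Real.sqrt (4 * Real.sqrt 2 / 3))^2)^2 by ring, Real.sq_sqrt h2,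
      show (4 * Real.sqrt 2 / 3)^2 = 16/9 * (Real.sqrt 2^2) by ring,
      Real.sq_sqrt (by norm_num : (0:ℝ) ≤ 2)]
    norm_num
  set c2 := Real.sqrt (4 * Real.sqrt 6 / 3) with hc2def
  set c1 := Real.sqrt (4 * Real.sqrt 2 / 3) with hc1def
  -- upper comparison
  have hupper : ∀ x ∈ Set.Icc (0:ℝ) (1/2), Real.sqrt (φ x) - Wfn c2 x ≤ 0 := by
    apply comp_principle
    · exact hwc.sub (Wfn_contOn c2)
    · rw [h0, Real.sqrt_zero, Wfn_zero]; norm_num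
    · rw [h12, Real.sqrt_zero, Wfn_half]; norm_num
    · intro x hx hgx
      have hev : deriv (fun t => Real.sqrt (φ t) - Wfn c2 t)
          =ᶠ[𝓝 x] (fun u => deriv φ u / (2 * Real.sqrt (φ u)) - Wfn1 c2 u) := by
        filter_upwards [hI.mem_nhds hx] with y hy
        exact ((hw1 y hy).sub ((W_hasDeriv c2 y hy).1)).deriv
      rw [hev.deriv_eq, (show deriv (fun u => deriv φ u / (2 * Real.sqrt (φ u)) - Wfn1 c2 u) x = _ from ((hw2 x hx).sub ((W_hasDeriv c2 x hx).2)).deriv)]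
      have := key_upper hx hc2pos hc2_4 (show Wfn c2 x < Real.sqrt (φ x) by linarith)
      linarith
  -- lower comparison
  have hlower : ∀ x ∈ Set.Icc (0:ℝ) (1/2), Wfn c1 x - Real.sqrt (φ x) ≤ 0 := by
    apply comp_principle
    · exact (Wfn_contOn c1).sub hwc
    · rw [h0, Real.sqrt_zero, Wfn_zero]; norm_num
    · rw [h12, Real.sqrt_zero, Wfn_half]; norm_num
    · intro x hx hgx
      have hev : deriv (fun t => Wfn c1 t - Real.sqrt (φ t))
          =ᶠ[𝓝 x] (fun u => Wfn1 c1 u - deriv φ u / (2 * Real.sqrt (φ u))) := by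
        filter_upwards [hI.mem_nhds hx] with y hy
        exact (((W_hasDeriv c1 y hy).1).sub (hw1 y hy)).deriv
      rw [hev.deriv_eq, (show deriv (fun u => Wfn1 c1 u - deriv φ u / (2 * Real.sqrt (φ u))) x = _ from (((W_hasDeriv c1 x hx).2).sub (hw2 x hx)).deriv), neg_div]
      have hr0 : 0 < Real.sqrt (φ x) := Real.sqrt_pos.mpr (hpos x hx)
      have := key_lower hx hc1pos hc1_4 hr0
        (show Real.sqrt (φ x) < Wfn c1 x by linarith)
      linarith
  -- conclusion
  intro η hη
  have hφnn : 0 ≤ φ η := by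
    rcases eq_or_lt_of_le hη.1 with he | hl
    · rw [← he, h0]
    · rcases eq_or_lt_of_le hη.2 with he2 | hl2
      · rw [he2, h12]
      · exact (hpos η ⟨hl, hl2⟩).le
  have hwsq : Real.sqrt (φ η)^2 = φ η := Real.sq_sqrt hφnn
  constructor
  · have h1 : Wfn c1 η ≤ Real.sqrt (φ η) := by linarith [hlower η hη]
    have h2 : (Wfn c1 η)^2 ≤ (Real.sqrt (φ η))^2 :=
      pow_le_pow_left₀ (Wfn_nonneg hc1pos.le η hη) h1 2
    rw [Wfn_sq c1 η hη, hwsq] at h2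
    have hc1sq : c1^2 = 4 * Real.sqrt 2 / 3 := Real.sq_sqrt (by positivity)
    rw [hc1sq] at h2
    calc (4 * Real.sqrt 2 / 3) * η * (1/2 - η) ^ ((3:ℝ)/2)
        = (4 * Real.sqrt 2 / 3) * (η * (1/2 - η) ^ ((3:ℝ)/2)) := by ring
      _ ≤ φ η := h2
  · have h1 : Real.sqrt (φ η) ≤ Wfn c2 η := by linarith [hupper η hη]
    have h2 : (Real.sqrt (φ η))^2 ≤ (Wfn c2 η)^2 :=
      pow_le_pow_left₀ (Real.sqrt_nonneg _) h1 2
    rw [Wfn_sq c2 η hη, hwsq] at h2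
    have hc2sq : c2^2 = 4 * Real.sqrt 6 / 3 := Real.sq_sqrt (by positivity)
    rw [hc2sq] at h2
    calc φ η ≤ (4 * Real.sqrt 6 / 3) * (η * (1/2 - η) ^ ((3:ℝ)/2)) := h2
      _ = (4 * Real.sqrt 6 / 3) * η * (1/2 - η) ^ ((3:ℝ)/2) := by ring
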